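/- arXiv:2009.05975 — 4 statements merged into one kernel-verified Lean document; each statement's English description precedes it below -/
import Mathlib

section
/- Define on ℝ⁴ the symmetric bilinear form g with matrix entries g₁₃ = g₃₁ = g₂₄ = g₄₂ = 1 and all other entries 0, and the linear map K = diag(1, 1, −1, −1). For A ∈ GL₂(ℝ), let T(A) ∈ GL₄(ℝ) be the block-diagonal matrix diag(A, (Aᵀ)⁻¹). Then: (i) T : GL₂(ℝ) → GL₄(ℝ) is an injective group homomorphism; (ii) det T(A) = 1 for all A; (iii) the image of T is exactly the set of U ∈ GL₄(ℝ) such that g(Ux, Uy) = g(x, y) for all x, y ∈ ℝ⁴ and U ∘ K = K ∘ U. -/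
noncomputable section

/-- The split-signature bilinear form on ℝ⁴: g(x,y) = x₁y₃ + x₃y₁ + x₂y₄ + x₄y₂. -/
def gSplit (x y : Fin 4 → ℝ) : ℝ := x 0 * y 2 + x 2 * y 0 + x 1 * y 3 + x 3 * y 1

/-- The paracomplex structure K = diag(1,1,-1,-1) as a matrix. -/
def Kmat : Matrix (Fin 4) (Fin 4) ℝ := Matrix.diagonal ![1, 1, -1, -1]

/-- The block-diagonal embedding A ↦ diag(A, (Aᵀ)⁻¹) of 2×2 matrices into 4×4 matrices. -/
def Tmat (A : Matrix (Fin 2) (Fin 2) ℝ) : Matrix (Fin 4) (Fin 4) ℝ :=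
  Matrix.reindex finSumFinEquiv finSumFinEquiv
    (Matrix.fromBlocks A 0 0 A.transpose⁻¹)

theorem Tmat_eq (A : Matrix (Fin 2) (Fin 2) ℝ) :
    Tmat A = !![A 0 0, A 0 1, 0, 0; A 1 0, A 1 1, 0, 0;
      0, 0, A.transpose⁻¹ 0 0, A.transpose⁻¹ 0 1;
      0, 0, A.transpose⁻¹ 1 0, A.transpose⁻¹ 1 1] := by
  ext i j
  fin_cases i <;> fin_cases j <;>
    simp [Tmat, Matrix.reindex_apply, Matrix.submatrix_apply] <;> rfl

theorem Tmat_gSplit (A : Matrix (Fin 2) (Fin 2) ℝ) (hA : IsUnit A.det) (x y : Fin 4 → ℝ) :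
    gSplit ((Tmat A).mulVec x) ((Tmat A).mulVec y) = gSplit x y := by
  have hAB : A.transpose * A.transpose⁻¹ = 1 :=
    Matrix.mul_nonsing_inv _ (by simpa using hA)
  have e00 := congrFun (congrFun hAB 0) 0
  have e01 := congrFun (congrFun hAB 0) 1
  have e10 := congrFun (congrFun hAB 1) 0
  have e11 := congrFun (congrFun hAB 1) 1
  simp [Matrix.mul_apply, Fin.sum_univ_two, Matrix.transpose_apply] at e00 e01 e10 e11
  rw [Tmat_eq]
  simp only [gSplit, Matrix.mulVec, dotProduct, Fin.sum_univ_four,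
    Matrix.cons_val', Matrix.cons_val_zero, Matrix.cons_val_one, Matrix.head_cons,
    Matrix.empty_val', Matrix.cons_val_fin_one, Matrix.head_fin_const,
    Matrix.cons_val_two, Matrix.cons_val_three, Matrix.tail_cons, Matrix.of_apply]
  linear_combination (x 0 * y 2 + x 2 * y 0) * e00 + (x 0 * y 3 + x 3 * y 0) * e01 +
    (x 1 * y 2 + x 2 * y 1) * e10 + (x 1 * y 3 + x 3 * y 1) * e11

theorem Tmat_comm_K (A : Matrix (Fin 2) (Fin 2) ℝ) : Tmat A * Kmat = Kmat * Tmat A := by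
  rw [Tmat_eq]
  ext i j
  fin_cases i <;> fin_cases j <;>
    simp [Kmat, Matrix.mul_apply, Fin.sum_univ_four, Matrix.diagonal,
      Matrix.vecHead, Matrix.vecTail]

/-- T is an injective group homomorphism GL₂(ℝ) → GL₄(ℝ),
det T(A) = 1, and its image is exactly the set of invertible matrices preserving g
and commuting with K. -/
theorem stmt_2 :
    (∀ A B : Matrix (Fin 2) (Fin 2) ℝ, IsUnit A.det → IsUnit B.det →
      Tmat (A * B) = Tmat A * Tmat B) ∧
    (∀ A B : Matrix (Fin 2) (Fin 2) ℝ, IsUnit A.det → IsUnit B.det →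
      Tmat A = Tmat B → A = B) ∧
    (∀ A : Matrix (Fin 2) (Fin 2) ℝ, IsUnit A.det → (Tmat A).det = 1) ∧
    (∀ U : Matrix (Fin 4) (Fin 4) ℝ, IsUnit U.det →
      (((∀ x y : Fin 4 → ℝ, gSplit (U.mulVec x) (U.mulVec y) = gSplit x y) ∧
        U * Kmat = Kmat * U) ↔
       ∃ A : Matrix (Fin 2) (Fin 2) ℝ, IsUnit A.det ∧ U = Tmat A)) := by
  refine ⟨?_, ?_, ?_, ?_⟩
  · intro A B _ _
    unfold Tmat
    rw [Matrix.reindex_apply, Matrix.reindex_apply, Matrix.reindex_apply,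
      Matrix.submatrix_mul_equiv _ _ _ _ _, Matrix.fromBlocks_multiply]
    simp [Matrix.transpose_mul, Matrix.mul_inv_rev]
  · intro A B _ _ h
    have h2 := (Matrix.reindex finSumFinEquiv finSumFinEquiv).injective h
    have := congrArg Matrix.toBlocks₁₁ h2
    simpa [Matrix.toBlocks_fromBlocks₁₁] using this
  · intro A hA
    unfold Tmat
    rw [Matrix.reindex_apply, Matrix.det_submatrix_equiv_self, Matrix.det_fromBlocks_zero₂₁,
      Matrix.det_nonsing_inv, Matrix.det_transpose]
    simp [Ring.inverse_eq_inv]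
    exact mul_inv_cancel₀ hA.ne_zero
  · intro U hU
    constructor
    · rintro ⟨hg, hK⟩
      have hz : ∀ i j : Fin 4, (U * Kmat) i j = (Kmat * U) i j := fun i j =>
        congrFun (congrFun hK i) j
      simp only [Kmat, Matrix.mul_diagonal, Matrix.diagonal_mul] at hz
      have z02 : U 0 2 = 0 := by have := hz 0 2; simp at this; linarith
      have z03 : U 0 3 = 0 := by have := hz 0 3; simp at this; linarith
      have z12 : U 1 2 = 0 := by have := hz 1 2; simp at this; linarith
      have z13 : U 1 3 = 0 := by have := hz 1 3; simp at this; linarith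
      have z20 : U 2 0 = 0 := by have := hz 2 0; simp at this; linarith
      have z21 : U 2 1 = 0 := by have := hz 2 1; simp at this; linarith
      have z30 : U 3 0 = 0 := by have := hz 3 0; simp at this; linarith
      have z31 : U 3 1 = 0 := by have := hz 3 1; simp at this; linarith
      have h02 := hg ![1,0,0,0] ![0,0,1,0]
      have h03 := hg ![1,0,0,0] ![0,0,0,1]
      have h12 := hg ![0,1,0,0] ![0,0,1,0]
      have h13 := hg ![0,1,0,0] ![0,0,0,1]
      simp [gSplit, Matrix.mulVec, dotProduct, Fin.sum_univ_four,
        z02, z03, z12, z13, z20, z21, z30, z31] at h02 h03 h12 h13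
      set A : Matrix (Fin 2) (Fin 2) ℝ := !![U 0 0, U 0 1; U 1 0, U 1 1] with hA
      set D : Matrix (Fin 2) (Fin 2) ℝ := !![U 2 2, U 2 3; U 3 2, U 3 3] with hD
      have hAD : A.transpose * D = 1 := by
        ext i j
        fin_cases i <;> fin_cases j <;>
          simp [hA, hD, Matrix.mul_apply, Fin.sum_univ_two, Matrix.vecHead,
            Matrix.vecTail] <;> linarith
      have hdet : IsUnit A.det := by
        have : A.transpose.det * D.det = 1 := by rw [← Matrix.det_mul, hAD, Matrix.det_one]
        rw [Matrix.det_transpose] at this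
        exact IsUnit.of_mul_eq_one _ this
      have hinv : A.transpose⁻¹ = D := Matrix.inv_eq_right_inv hAD
      refine ⟨A, hdet, ?_⟩
      rw [Tmat_eq, hinv]
      ext i j
      fin_cases i <;> fin_cases j <;>
        simp [hA, hD, z02, z03, z12, z13, z20, z21, z30, z31, Matrix.vecHead,
          Matrix.vecTail]
    · rintro ⟨A, hA, rfl⟩
      exact ⟨Tmat_gSplit A hA, Tmat_comm_K A⟩
end
end

section
/- Let s ≠ 0 be a real constant and define on the open set of (a,b,x,y) ∈ ℝ⁴ where (1 − (3/2)s·a·x) > 0 and (1 − (3/2)s·b·y) > 0 the function V(a,b,x,y) = −(2/(3s))·log((1 − (3/2)s·a·x)(1 − (3/2)s·b·y)). Then the mixed second partial derivatives satisfy V_{ax}·V_{by} − V_{ay}·V_{bx} = e^{3sV}, i.e., V satisfies the para-Kähler–Einstein potential equation det[[V_{ax}, V_{ay}],[V_{bx}, V_{by}]] = c₁c₂·e^{−ΛV} with Λ = −3s and c₁c₂ = 1. -/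
/-- The potential V(a,b,x,y) = −(2/(3s))·log((1−(3/2)sax)(1−(3/2)sby))
satisfies the para-Kähler–Einstein potential equation
V_{ax}V_{by} − V_{ay}V_{bx} = e^{3sV} on the region where both factors are positive. -/
theorem stmt_7 (s : ℝ) (hs : s ≠ 0)
    (V : ℝ → ℝ → ℝ → ℝ → ℝ)
    (hV : ∀ a b x y, V a b x y =
      -(2 / (3 * s)) * Real.log ((1 - (3 / 2) * s * a * x) * (1 - (3 / 2) * s * b * y)))
    (a b x y : ℝ)
    (h1 : 1 - (3 / 2) * s * a * x > 0) (h2 : 1 - (3 / 2) * s * b * y > 0) :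
    (deriv (fun a' => deriv (fun x' => V a' b x' y) x) a) *
      (deriv (fun b' => deriv (fun y' => V a b' x y') y) b) -
    (deriv (fun a' => deriv (fun y' => V a' b x y') y) a) *
      (deriv (fun b' => deriv (fun x' => V a b' x' y) x) b) =
    Real.exp (3 * s * V a b x y) := by
  -- inner x-derivative formula
  have key_x : ∀ a' b', 1 - (3 / 2) * s * a' * x ≠ 0 → 1 - (3 / 2) * s * b' * y ≠ 0 →
      deriv (fun x' => V a' b' x' y) x = a' / (1 - (3 / 2) * s * a' * x) := by
    intro a' b' hP hQ
    have h0 : HasDerivAt (fun x' => 1 - (3 / 2) * s * a' * x') (-((3 / 2) * s * a')) x := by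
      simpa using ((hasDerivAt_id x).const_mul ((3 / 2) * s * a')).const_sub 1
    have hm : HasDerivAt (fun x' => (1 - (3 / 2) * s * a' * x') * (1 - (3 / 2) * s * b' * y))
        (-((3 / 2) * s * a') * (1 - (3 / 2) * s * b' * y)) x := h0.mul_const _
    have hd : HasDerivAt (fun x' => V a' b' x' y)
        (-(2 / (3 * s)) * ((-((3 / 2) * s * a') * (1 - (3 / 2) * s * b' * y)) /
          ((1 - (3 / 2) * s * a' * x) * (1 - (3 / 2) * s * b' * y)))) x := by
      have := (hm.log (mul_ne_zero hP hQ)).const_mul (-(2 / (3 * s)))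
      simpa [hV] using this
    rw [hd.deriv, mul_div_mul_right _ _ hQ, ← mul_div_assoc]
    congr 1
    field_simp
  have key_y : ∀ a' b', 1 - (3 / 2) * s * a' * x ≠ 0 → 1 - (3 / 2) * s * b' * y ≠ 0 →
      deriv (fun y' => V a' b' x y') y = b' / (1 - (3 / 2) * s * b' * y) := by
    intro a' b' hP hQ
    have h0 : HasDerivAt (fun y' => 1 - (3 / 2) * s * b' * y') (-((3 / 2) * s * b')) y := by
      simpa using ((hasDerivAt_id y).const_mul ((3 / 2) * s * b')).const_sub 1
    have hm : HasDerivAt (fun y' => (1 - (3 / 2) * s * a' * x) * (1 - (3 / 2) * s * b' * y'))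
        ((1 - (3 / 2) * s * a' * x) * -((3 / 2) * s * b')) y := h0.const_mul _
    have hd : HasDerivAt (fun y' => V a' b' x y')
        (-(2 / (3 * s)) * (((1 - (3 / 2) * s * a' * x) * -((3 / 2) * s * b')) /
          ((1 - (3 / 2) * s * a' * x) * (1 - (3 / 2) * s * b' * y)))) y := by
      have := (hm.log (mul_ne_zero hP hQ)).const_mul (-(2 / (3 * s)))
      simpa [hV] using this
    rw [hd.deriv, mul_div_mul_left _ _ hP, ← mul_div_assoc]
    congr 1
    field_simp
  have hcA : ContinuousAt (fun a' : ℝ => 1 - (3 / 2) * s * a' * x) a := by fun_prop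
  have hcB : ContinuousAt (fun b' : ℝ => 1 - (3 / 2) * s * b' * y) b := by fun_prop
  have hax : deriv (fun a' => deriv (fun x' => V a' b x' y) x) a
      = 1 / (1 - (3 / 2) * s * a * x) ^ 2 := by
    have hev : (fun a' => deriv (fun x' => V a' b x' y) x)
        =ᶠ[nhds a] fun a' => a' / (1 - (3 / 2) * s * a' * x) := by
      filter_upwards [hcA.eventually_ne h1.ne'] with a' ha'
      exact key_x a' b ha' h2.ne'
    rw [hev.deriv_eq]
    have h0 : HasDerivAt (fun a' : ℝ => 1 - (3 / 2) * s * a' * x) (-((3 / 2) * s * x)) a := by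
      have := (((hasDerivAt_id a).const_mul ((3 / 2) * s)).mul_const x).const_sub 1
      simpa using this
    have hdiv : HasDerivAt (fun a' : ℝ => a' / (1 - (3 / 2) * s * a' * x))
        ((1 * (1 - (3 / 2) * s * a * x) - a * -((3 / 2) * s * x)) /
          (1 - (3 / 2) * s * a * x) ^ 2) a := (hasDerivAt_id a).div h0 h1.ne'
    rw [hdiv.deriv, div_eq_div_iff (pow_ne_zero _ h1.ne') (pow_ne_zero _ h1.ne')]
    ring
  have hby : deriv (fun b' => deriv (fun y' => V a b' x y') y) b
      = 1 / (1 - (3 / 2) * s * b * y) ^ 2 := by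
    have hev : (fun b' => deriv (fun y' => V a b' x y') y)
        =ᶠ[nhds b] fun b' => b' / (1 - (3 / 2) * s * b' * y) := by
      filter_upwards [hcB.eventually_ne h2.ne'] with b' hb'
      exact key_y a b' h1.ne' hb'
    rw [hev.deriv_eq]
    have h0 : HasDerivAt (fun b' : ℝ => 1 - (3 / 2) * s * b' * y) (-((3 / 2) * s * y)) b := by
      have := (((hasDerivAt_id b).const_mul ((3 / 2) * s)).mul_const y).const_sub 1
      simpa using this
    have hdiv : HasDerivAt (fun b' : ℝ => b' / (1 - (3 / 2) * s * b' * y))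
        ((1 * (1 - (3 / 2) * s * b * y) - b * -((3 / 2) * s * y)) /
          (1 - (3 / 2) * s * b * y) ^ 2) b := (hasDerivAt_id b).div h0 h2.ne'
    rw [hdiv.deriv, div_eq_div_iff (pow_ne_zero _ h2.ne') (pow_ne_zero _ h2.ne')]
    ring
  have hay : deriv (fun a' => deriv (fun y' => V a' b x y') y) a = 0 := by
    have hev : (fun a' => deriv (fun y' => V a' b x y') y)
        =ᶠ[nhds a] fun _ => b / (1 - (3 / 2) * s * b * y) := by
      filter_upwards [hcA.eventually_ne h1.ne'] with a' ha'
      exact key_y a' b ha' h2.ne'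
    rw [hev.deriv_eq, deriv_const]
  have hbx : deriv (fun b' => deriv (fun x' => V a b' x' y) x) b = 0 := by
    have hev : (fun b' => deriv (fun x' => V a b' x' y) x)
        =ᶠ[nhds b] fun _ => a / (1 - (3 / 2) * s * a * x) := by
      filter_upwards [hcB.eventually_ne h2.ne'] with b' hb'
      exact key_x a b' h1.ne' hb'
    rw [hev.deriv_eq, deriv_const]
  rw [hax, hby, hay, hbx, hV]
  have hT : (0:ℝ) < (1 - (3 / 2) * s * a * x) * (1 - (3 / 2) * s * b * y) := mul_pos h1 h2
  have hlog : 3 * s * (-(2 / (3 * s)) *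
      Real.log ((1 - (3 / 2) * s * a * x) * (1 - (3 / 2) * s * b * y)))
      = Real.log ((((1 - (3 / 2) * s * a * x) * (1 - (3 / 2) * s * b * y)) ^ 2)⁻¹) := by
    rw [Real.log_inv, Real.log_pow]
    push_cast
    field_simp
  rw [hlog, Real.exp_log (by positivity), zero_mul, sub_zero, mul_pow, mul_inv,
    one_div, one_div]
end

section
/- Let s ≠ 0 be a real constant and define on the open set of (a,b,x,y) ∈ ℝ⁴ where D := b + a·x − y > 0 the function V(a,b,x,y) = −(1/s)·log(b + a·x − y). Then V_{ax}·V_{by} − V_{ay}·V_{bx} = (1/s²)·e^{3sV}, i.e., V satisfies the para-Kähler–Einstein potential equation det[[V_{ax}, V_{ay}],[V_{bx}, V_{by}]] = c₁c₂·e^{−ΛV} with Λ = −3s and c₁c₂ = 1/s². -/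
open Real Filter

/-- The 'dancing metric' potential V(a,b,x,y) = −(1/s)·log(b + ax − y)
satisfies V_{ax}V_{by} − V_{ay}V_{bx} = (1/s²)·e^{3sV} on the region b + ax − y > 0. -/
theorem stmt_8 (s : ℝ) (hs : s ≠ 0)
    (V : ℝ → ℝ → ℝ → ℝ → ℝ)
    (hV : ∀ a b x y, V a b x y = -(1 / s) * Real.log (b + a * x - y))
    (a b x y : ℝ)
    (h1 : b + a * x - y > 0) :
    (deriv (fun a' => deriv (fun x' => V a' b x' y) x) a) *
      (deriv (fun b' => deriv (fun y' => V a b' x y') y) b) -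
    (deriv (fun a' => deriv (fun y' => V a' b x y') y) a) *
      (deriv (fun b' => deriv (fun x' => V a b' x' y) x) b) =
    (1 / s ^ 2) * Real.exp (3 * s * V a b x y) := by
  have hD : b + a * x - y ≠ 0 := ne_of_gt h1
  -- derivative of K * log (c*u + d)
  have hinner : ∀ (K c d t : ℝ), c * t + d ≠ 0 →
      deriv (fun u => K * Real.log (c * u + d)) t = K * (c / (c * t + d)) := by
    intro K c d t h
    have h0 : HasDerivAt (fun u : ℝ => c * u + d) c t := by
      simpa using (((hasDerivAt_id t).const_mul c).add_const d)
    exact ((h0.log h).const_mul K).deriv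
  -- derivative of K * (c*u + d)⁻¹
  have houter : ∀ (K c d t : ℝ), c * t + d ≠ 0 →
      deriv (fun u => K * (c * u + d)⁻¹) t = K * (-c / (c * t + d) ^ 2) := by
    intro K c d t h
    have h0 : HasDerivAt (fun u : ℝ => c * u + d) c t := by
      simpa using (((hasDerivAt_id t).const_mul c).add_const d)
    exact ((h0.inv h).const_mul K).deriv
  have heva : ∀ᶠ a' in nhds a, 0 < b + a' * x - y := by
    have hc : ContinuousAt (fun a' : ℝ => b + a' * x - y) a := by fun_prop
    exact hc.eventually (eventually_gt_nhds h1)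
  have hevb : ∀ᶠ b' in nhds b, 0 < b' + a * x - y := by
    have hc : ContinuousAt (fun b' : ℝ => b' + a * x - y) b := by fun_prop
    exact hc.eventually (eventually_gt_nhds h1)
  -- V_ax
  have hax : deriv (fun a' => deriv (fun x' => V a' b x' y) x) a
      = -(1 / s) * ((b - y) / (b + a * x - y) ^ 2) := by
    have heq : (fun a' => deriv (fun x' => V a' b x' y) x) =ᶠ[nhds a]
        (fun a' => -(1 / s) * (a' / (a' * x + (b - y)))) := by
      filter_upwards [heva] with a' ha'
      have hfun : (fun x' => V a' b x' y)
          = (fun x' => -(1 / s) * Real.log (a' * x' + (b - y))) := by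
        funext x'; rw [hV]; congr 1; ring
      rw [hfun, hinner (-(1 / s)) a' (b - y) x (by nlinarith)]
    rw [heq.deriv_eq]
    have h0 : HasDerivAt (fun a' : ℝ => a' * x + (b - y)) x a := by
      simpa using (((hasDerivAt_id a).mul_const x).add_const (b - y))
    have h2 := ((hasDerivAt_id a).div h0 (by nlinarith)).const_mul (-(1 / s))
    have h3 := h2.deriv
    simp only [id_eq, Pi.div_apply] at h3
    rw [h3, show a * x + (b - y) = b + a * x - y by ring]
    ring
  -- V_by
  have hby : deriv (fun b' => deriv (fun y' => V a b' x y') y) b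
      = -(1 / s) * (1 / (b + a * x - y) ^ 2) := by
    have heq : (fun b' => deriv (fun y' => V a b' x y') y) =ᶠ[nhds b]
        (fun b' => (1 / s) * ((1 : ℝ) * b' + (a * x - y))⁻¹) := by
      filter_upwards [hevb] with b' hb'
      have hfun : (fun y' => V a b' x y')
          = (fun y' => -(1 / s) * Real.log ((-1) * y' + (b' + a * x))) := by
        funext y'; rw [hV]; congr 1; ring
      rw [hfun, hinner (-(1 / s)) (-1) (b' + a * x) y (by nlinarith),
        show (-1 : ℝ) * y + (b' + a * x) = 1 * b' + (a * x - y) by ring]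
      ring
    rw [heq.deriv_eq, houter (1 / s) 1 (a * x - y) b (by nlinarith)]
    ring
  -- V_ay
  have hay : deriv (fun a' => deriv (fun y' => V a' b x y') y) a
      = -(1 / s) * (x / (b + a * x - y) ^ 2) := by
    have heq : (fun a' => deriv (fun y' => V a' b x y') y) =ᶠ[nhds a]
        (fun a' => (1 / s) * (x * a' + (b - y))⁻¹) := by
      filter_upwards [heva] with a' ha'
      have hfun : (fun y' => V a' b x y')
          = (fun y' => -(1 / s) * Real.log ((-1) * y' + (b + a' * x))) := by
        funext y'; rw [hV]; congr 1; ring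
      rw [hfun, hinner (-(1 / s)) (-1) (b + a' * x) y (by nlinarith),
        show (-1 : ℝ) * y + (b + a' * x) = x * a' + (b - y) by ring]
      ring
    rw [heq.deriv_eq, houter (1 / s) x (b - y) a (by nlinarith)]
    ring
  -- V_bx
  have hbx : deriv (fun b' => deriv (fun x' => V a b' x' y) x) b
      = (1 / s) * (a / (b + a * x - y) ^ 2) := by
    have heq : (fun b' => deriv (fun x' => V a b' x' y) x) =ᶠ[nhds b]
        (fun b' => (-(a / s)) * ((1 : ℝ) * b' + (a * x - y))⁻¹) := by
      filter_upwards [hevb] with b' hb'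
      have hfun : (fun x' => V a b' x' y)
          = (fun x' => -(1 / s) * Real.log (a * x' + (b' - y))) := by
        funext x'; rw [hV]; congr 1; ring
      rw [hfun, hinner (-(1 / s)) a (b' - y) x (by nlinarith),
        show a * x + (b' - y) = 1 * b' + (a * x - y) by ring]
      ring
    rw [heq.deriv_eq, houter (-(a / s)) 1 (a * x - y) b (by nlinarith)]
    ring
  -- exponential side
  have hexp : Real.exp (3 * s * V a b x y) = ((b + a * x - y) ^ 3)⁻¹ := by
    rw [hV]
    have : 3 * s * (-(1 / s) * Real.log (b + a * x - y))
        = -Real.log ((b + a * x - y) ^ 3) := by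
      rw [Real.log_pow]; push_cast; field_simp
    rw [this, Real.exp_neg, Real.exp_log (by positivity)]
  rw [hax, hby, hay, hbx, hexp]
  field_simp
  ring
end

section
/- Let s ≠ 0 be a real constant, and let p : ℝ → ℝ and q : ℝ → ℝ be twice continuously differentiable functions. On an open set U ⊆ ℝ² where p(u) ≠ q(v) and 2·p'(u)·q'(v)/(−3s·(p(u)−q(v))²) > 0, define F(u,v) = log(2·p'(u)·q'(v)/(−3s·(p(u)−q(v))²)). Then F satisfies Liouville's equation ∂²F/∂u∂v = 3s·e^{F} on U. -/
/-- For C² functions p, q and nonzero constant s, the function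
F(u,v) = log(2p′(u)q′(v)/(−3s(p(u)−q(v))²)) satisfies Liouville's equation
∂_v ∂_u F = 3s·e^F on an open set where the argument of the log is positive. -/
theorem stmt_9 (s : ℝ) (hs : s ≠ 0)
    (p q : ℝ → ℝ) (hp : ContDiff ℝ 2 p) (hq : ContDiff ℝ 2 q)
    (U : Set (ℝ × ℝ)) (hU : IsOpen U)
    (hne : ∀ z ∈ U, p z.1 ≠ q z.2)
    (hpos : ∀ z ∈ U, 0 < 2 * deriv p z.1 * deriv q z.2 / (-3 * s * (p z.1 - q z.2) ^ 2))
    (F : ℝ → ℝ → ℝ)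
    (hF : ∀ u v, F u v =
      Real.log (2 * deriv p u * deriv q v / (-3 * s * (p u - q v) ^ 2))) :
    ∀ u v, (u, v) ∈ U →
      deriv (fun v' => deriv (fun u' => F u' v') u) v = 3 * s * Real.exp (F u v) := by
  intro u v huv
  have hp1 : Differentiable ℝ p := hp.differentiable (by norm_num)
  have hq1 : Differentiable ℝ q := hq.differentiable (by norm_num)
  have hp2 : ContDiff ℝ (1 + 1) p := by exact_mod_cast hp
  have hq2 : ContDiff ℝ (1 + 1) q := by exact_mod_cast hq
  have hpd : ContDiff ℝ 1 (deriv p) := (contDiff_succ_iff_deriv.mp hp2).2.2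
  have hqd : ContDiff ℝ 1 (deriv q) := (contDiff_succ_iff_deriv.mp hq2).2.2
  have hpd1 : Differentiable ℝ (deriv p) := hpd.differentiable (by norm_num)
  have h3s : (-3 : ℝ) * s ≠ 0 := by
    intro h; apply hs; nlinarith
  have key : ∀ z ∈ U, deriv p z.1 ≠ 0 ∧ deriv q z.2 ≠ 0 := by
    intro z hz
    have h1 := hpos z hz
    constructor <;> intro h0 <;> rw [h0] at h1 <;> simp at h1
  have hsplit : ∀ a b, deriv p a ≠ 0 → deriv q b ≠ 0 → p a ≠ q b →
      F a b = Real.log 2 + Real.log (deriv p a) + Real.log (deriv q b)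
        - Real.log (-3 * s) - 2 * Real.log (p a - q b) := by
    intro a b h1 h2 h3
    have hsub : p a - q b ≠ 0 := sub_ne_zero.mpr h3
    rw [hF, Real.log_div (mul_ne_zero (mul_ne_zero two_ne_zero h1) h2)
        (mul_ne_zero h3s (pow_ne_zero 2 hsub)),
      Real.log_mul (mul_ne_zero two_ne_zero h1) h2,
      Real.log_mul two_ne_zero h1,
      Real.log_mul h3s (pow_ne_zero 2 hsub), Real.log_pow]
    push_cast
    ring
  -- inner derivative formula
  have hinner : ∀ v', (u, v') ∈ U →
      deriv (fun u' => F u' v') u =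
        deriv (deriv p) u / deriv p u - 2 * (deriv p u / (p u - q v')) := by
    intro v' hv'
    obtain ⟨hpu, hqv'⟩ := key (u, v') hv'
    have hsub : p u - q v' ≠ 0 := sub_ne_zero.mpr (hne (u, v') hv')
    have hev1 : ∀ᶠ u' in nhds u, deriv p u' ≠ 0 :=
      (hpd.continuous.continuousAt (x := u)).eventually_ne hpu
    have hev2 : ∀ᶠ u' in nhds u, p u' - q v' ≠ 0 :=
      ((hp1.continuous.sub continuous_const).continuousAt (x := u)).eventually_ne hsub
    have hevF : (fun u' => F u' v') =ᶠ[nhds u] fun u' =>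
        Real.log 2 + Real.log (deriv p u') + Real.log (deriv q v')
          - Real.log (-3 * s) - 2 * Real.log (p u' - q v') := by
      filter_upwards [hev1, hev2] with u' h1 h2
      exact hsplit u' v' h1 hqv' (sub_ne_zero.mp h2)
    rw [hevF.deriv_eq]
    have H1 : HasDerivAt (fun u' => Real.log (deriv p u'))
        (deriv (deriv p) u / deriv p u) u := (hpd1 u).hasDerivAt.log hpu
    have H2 : HasDerivAt (fun u' => Real.log (p u' - q v'))
        (deriv p u / (p u - q v')) u := by
      have := ((hp1 u).hasDerivAt.sub_const (q v')).log hsub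
      exact this
    have H := (((H1.const_add (Real.log 2)).add_const
        (Real.log (deriv q v'))).sub_const (Real.log (-3 * s))).sub (H2.const_mul 2)
    exact H.deriv
  have hVmem : {v' : ℝ | (u, v') ∈ U} ∈ nhds v :=
    (hU.preimage (Continuous.prodMk_right u)).mem_nhds huv
  have hev : (fun v' => deriv (fun u' => F u' v') u) =ᶠ[nhds v]
      fun v' => deriv (deriv p) u / deriv p u - 2 * (deriv p u / (p u - q v')) := by
    filter_upwards [hVmem] with v' hv' using hinner v' hv'
  rw [hev.deriv_eq]
  obtain ⟨hpu, hqv⟩ := key (u, v) huv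
  have hsubv : p u - q v ≠ 0 := sub_ne_zero.mpr (hne (u, v) huv)
  have Hq : HasDerivAt (fun v' => p u - q v') (-deriv q v) v :=
    (hq1 v).hasDerivAt.const_sub (p u)
  have Hdiv : HasDerivAt (fun v' => deriv p u / (p u - q v'))
      ((0 * (p u - q v) - deriv p u * (-deriv q v)) / (p u - q v) ^ 2) v :=
    (hasDerivAt_const v (deriv p u)).div Hq hsubv
  have H := (Hdiv.const_mul 2).const_sub (deriv (deriv p) u / deriv p u)
  rw [H.deriv, hF, Real.exp_log (hpos (u, v) huv)]
  field_simp
  ring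
end
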